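/- Let S be a partial plane spread in PG(6,2) of size 16, let N be its set of holes (so #N = 15), let n = dim⟨N⟩, and for i ≥ 0 let a_i be the number of hyperplanes of V containing exactly i blocks of S. Then n ∈ {4,5,6,7}, a_0 = 2^(7−n) − 1 (the number of hyperplanes containing ⟨N⟩), a_1 = 21 − 3·a_0, a_2 = 99 + 3·a_0, a_3 = 7 − a_0, and a_i = 0 for all i ≥ 4. -/

import Mathlib

open Module

abbrev V2 : Type := Fin 7 → ZMod 2

/-- A partial plane spread in PG(6,2): a set of 3-dimensional subspaces of `V2 = F₂⁷`
(the blocks) any two distinct members of which intersect trivially. -/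
def IsPPS (S : Set (Submodule (ZMod 2) V2)) : Prop :=
  (∀ B ∈ S, finrank (ZMod 2) ↥B = 3) ∧
    ∀ B₁ ∈ S, ∀ B₂ ∈ S, B₁ ≠ B₂ → B₁ ⊓ B₂ = ⊥

/-- A point (1-dimensional subspace) of `V2` is a hole of `S` if it is contained
in no block of `S`. -/
def IsHole (S : Set (Submodule (ZMod 2) V2)) (P : Submodule (ZMod 2) V2) : Prop :=
  finrank (ZMod 2) ↥P = 1 ∧ ∀ B ∈ S, ¬ P ≤ B

/-- The number of holes of `S` contained in the subspace `X`. -/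
noncomputable def holeCount (S : Set (Submodule (ZMod 2) V2))
    (X : Submodule (ZMod 2) V2) : ℕ :=
  {P | IsHole S P ∧ P ≤ X}.ncard

/-- The span `⟨N⟩` of the set of holes of `S`. -/
noncomputable def holeSpan (S : Set (Submodule (ZMod 2) V2)) : Submodule (ZMod 2) V2 :=
  sSup {P | IsHole S P}

/-- The number of blocks of `S` contained in the subspace `H`. -/
noncomputable def blocksIn (S : Set (Submodule (ZMod 2) V2))
    (H : Submodule (ZMod 2) V2) : ℕ :=
  {B ∈ S | B ≤ H}.ncard

/-- `spec S i` = the number of hyperplanes of `V2` containing exactly `i` blocks of `S`. -/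
noncomputable def spec (S : Set (Submodule (ZMod 2) V2)) (i : ℕ) : ℕ :=
  {H : Submodule (ZMod 2) V2 | finrank (ZMod 2) ↥H = 6 ∧ blocksIn S H = i}.ncard


lemma rankV : finrank (ZMod 2) V2 = 7 := by simp [finrank_fintype_fun_eq_card]

lemma cardSub (X : Submodule (ZMod 2) V2) : Nat.card X = 2 ^ finrank (ZMod 2) X := by
  have : Fintype X := Fintype.ofFinite X
  rw [Nat.card_eq_fintype_card, card_eq_pow_finrank (K := ZMod 2)]; simp [ZMod.card]

lemma annih (W : Subspace (ZMod 2) V2) :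
    finrank (ZMod 2) W.dualAnnihilator = 7 - finrank (ZMod 2) W := by
  have h : finrank (ZMod 2) (V2 ⧸ W) = finrank (ZMod 2) W.dualAnnihilator := (Subspace.quotEquivAnnihilator W).finrank_eq
  have h2 := Submodule.finrank_quotient_add_finrank W
  rw [rankV] at h2; omega

lemma exists_gen (P : Submodule (ZMod 2) V2) (h : finrank (ZMod 2) P = 1) :
    ∃ v : V2, v ≠ 0 ∧ v ∈ P ∧ P = Submodule.span (ZMod 2) {v} := by
  obtain ⟨v, hv0, hv⟩ := finrank_eq_one_iff'.mp h
  refine ⟨v, by simpa using hv0, v.2, le_antisymm ?_ ?_⟩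
  · intro x hx
    obtain ⟨c, hc⟩ := hv ⟨x, hx⟩
    exact Submodule.mem_span_singleton.2 ⟨c, congrArg Subtype.val hc⟩
  · rw [Submodule.span_singleton_le_iff_mem]; exact v.2

lemma two_ne_zero_mod : ∀ a : ZMod 2, a ≠ 0 → a = 1 := by decide

lemma ncard_nonzero {M : Type} [AddCommGroup M] [Module (ZMod 2) M] [Finite M]
    (U : Submodule (ZMod 2) M) :
    ((U : Set M) \ {0}).ncard = 2 ^ finrank (ZMod 2) U - 1 := by
  have hF : (U : Set M).Finite := Set.toFinite _
  rw [Set.ncard_diff_singleton_of_mem U.zero_mem, ← Nat.card_coe_set_eq (s := (U : Set M))]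
  congr 1
  have : Fintype U := Fintype.ofFinite U
  rw [Nat.card_eq_fintype_card, card_eq_pow_finrank (K := ZMod 2)]; simp [ZMod.card]

lemma point_count (X : Submodule (ZMod 2) V2) :
    {P : Submodule (ZMod 2) V2 | finrank (ZMod 2) P = 1 ∧ P ≤ X}.ncard
      = 2 ^ finrank (ZMod 2) X - 1 := by
  have himg : {P : Submodule (ZMod 2) V2 | finrank (ZMod 2) P = 1 ∧ P ≤ X}
      = (fun v => Submodule.span (ZMod 2) {v}) '' ((X : Set V2) \ {0}) := by
    ext P
    constructor
    · rintro ⟨h1, h2⟩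
      obtain ⟨v, hv0, hvP, rfl⟩ := exists_gen P h1
      exact ⟨v, ⟨h2 hvP, hv0⟩, rfl⟩
    · rintro ⟨v, ⟨hvX, hv0⟩, rfl⟩
      refine ⟨finrank_span_singleton (by simpa using hv0), ?_⟩
      rwa [Submodule.span_singleton_le_iff_mem]
  rw [himg, Set.ncard_image_of_injOn, ncard_nonzero]
  rintro v ⟨-, hv0⟩ w ⟨-, hw0⟩ h
  have h' : Submodule.span (ZMod 2) {v} = Submodule.span (ZMod 2) {w} := h
  have : v ∈ Submodule.span (ZMod 2) {w} := h' ▸ Submodule.mem_span_singleton_self v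
  obtain ⟨c, rfl⟩ := Submodule.mem_span_singleton.1 this
  have hc : c ≠ 0 := by rintro rfl; simp at hv0
  rw [two_ne_zero_mod c hc, one_smul]

lemma ker_rank6 (f : Module.Dual (ZMod 2) V2) (hf : f ≠ 0) :
    finrank (ZMod 2) (LinearMap.ker f) = 6 := by
  have h1 := LinearMap.finrank_range_add_finrank_ker f
  have h2 : LinearMap.range f = ⊤ := by
    rcases eq_bot_or_eq_top (LinearMap.range f) with h | h
    · exact absurd (LinearMap.range_eq_bot.1 h) hf
    · exact h
  rw [h2, finrank_top, rankV, finrank_self] at h1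
  omega

instance : Finite (Module.Dual (ZMod 2) V2) :=
  Finite.of_injective (fun f => (f : V2 → ZMod 2)) DFunLike.coe_injective

lemma hyp_count (W : Submodule (ZMod 2) V2) :
    {H : Submodule (ZMod 2) V2 | finrank (ZMod 2) H = 6 ∧ W ≤ H}.ncard
      = 2 ^ (7 - finrank (ZMod 2) W) - 1 := by
  have himg : {H : Submodule (ZMod 2) V2 | finrank (ZMod 2) H = 6 ∧ W ≤ H}
      = (fun f => LinearMap.ker f) '' ((W.dualAnnihilator : Set (Module.Dual (ZMod 2) V2)) \ {0}) := by
    ext H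
    constructor
    · rintro ⟨h6, hWH⟩
      have hq : finrank (ZMod 2) (V2 ⧸ H) = 1 := by
        have := Submodule.finrank_quotient_add_finrank H
        rw [rankV, h6] at this; omega
      have e : (V2 ⧸ H) ≃ₗ[ZMod 2] ZMod 2 :=
        LinearEquiv.ofFinrankEq _ _ (by rw [hq, finrank_self])
      have hker : LinearMap.ker (e.toLinearMap ∘ₗ H.mkQ) = H := by
        rw [LinearMap.ker_comp, LinearMap.ker_eq_bot.2 e.injective, Submodule.comap_bot,
          Submodule.ker_mkQ]
      refine ⟨e.toLinearMap ∘ₗ H.mkQ, ⟨?_, ?_⟩, hker⟩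
      · simp only [SetLike.mem_coe, Submodule.mem_dualAnnihilator]
        intro w hw
        have h0 : H.mkQ w = 0 := by
          rw [Submodule.mkQ_apply, Submodule.Quotient.mk_eq_zero]
          exact hWH hw
        simp [LinearMap.comp_apply, h0]
      · intro h0
        simp only [Set.mem_singleton_iff] at h0
        rw [h0, LinearMap.ker_zero] at hker
        have : finrank (ZMod 2) (⊤ : Submodule (ZMod 2) V2) = 6 := by rw [hker, h6]
        rw [finrank_top, rankV] at this
        omega
    · rintro ⟨f, ⟨hfA, hf0⟩, rfl⟩
      simp only [Set.mem_singleton_iff] at hf0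
      refine ⟨ker_rank6 f hf0, ?_⟩
      intro w hw
      simp only [SetLike.mem_coe, Submodule.mem_dualAnnihilator] at hfA
      exact LinearMap.mem_ker.2 (hfA w hw)
  rw [himg, Set.ncard_image_of_injOn, ncard_nonzero, annih]
  rintro f ⟨-, hf0⟩ g ⟨-, hg0⟩ h
  simp only [Set.mem_singleton_iff] at hf0 hg0
  have h' : LinearMap.ker f = LinearMap.ker g := h
  apply LinearMap.ext; intro v
  by_cases hv : f v = 0
  · have : v ∈ LinearMap.ker g := h' ▸ LinearMap.mem_ker.2 hv
    simp [hv, LinearMap.mem_ker.1 this]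
  · have hgv : g v ≠ 0 := by
      intro h0
      have : v ∈ LinearMap.ker f := h'.symm ▸ LinearMap.mem_ker.2 h0
      exact hv (LinearMap.mem_ker.1 this)
    rw [two_ne_zero_mod _ hv, two_ne_zero_mod _ hgv]

lemma inf_rank2 (B H : Submodule (ZMod 2) V2) (hB3 : finrank (ZMod 2) B = 3)
    (hH : finrank (ZMod 2) H = 6) (hnle : ¬ B ≤ H) : finrank (ZMod 2) ↥(B ⊓ H) = 2 := by
  have hsum := Submodule.finrank_sup_add_finrank_inf_eq B H
  have hle : finrank (ZMod 2) ↥(B ⊔ H) ≤ 7 := by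
    have := Submodule.finrank_le (B ⊔ H)
    rwa [rankV] at this
  have hup : finrank (ZMod 2) ↥(B ⊓ H) ≤ 3 := by
    have := Submodule.finrank_mono (inf_le_left : B ⊓ H ≤ B)
    omega
  have hne3 : finrank (ZMod 2) ↥(B ⊓ H) ≠ 3 := by
    intro h3
    have heq : B ⊓ H = B :=
      Submodule.eq_of_le_of_finrank_le inf_le_left (by omega)
    exact hnle (heq ▸ (inf_le_right : B ⊓ H ≤ H))
  omega

lemma sup_rank6 (B1 B2 : Submodule (ZMod 2) V2) (h1 : finrank (ZMod 2) B1 = 3)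
    (h2 : finrank (ZMod 2) B2 = 3) (hinf : B1 ⊓ B2 = ⊥) :
    finrank (ZMod 2) ↥(B1 ⊔ B2) = 6 := by
  have hsum := Submodule.finrank_sup_add_finrank_inf_eq B1 B2
  rw [hinf, h1, h2, finrank_bot] at hsum
  omega

lemma partition_lemma (S : Set (Submodule (ZMod 2) V2)) (hS : IsPPS S) (hSfin : S.Finite)
    (X : Submodule (ZMod 2) V2) :
    2 ^ finrank (ZMod 2) X - 1
      = (∑ B ∈ hSfin.toFinset, (2 ^ finrank (ZMod 2) ↥(B ⊓ X) - 1)) + holeCount S X := by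
  classical
  set pts : Submodule (ZMod 2) V2 → Finset (Submodule (ZMod 2) V2) :=
    fun Y => (Set.toFinite {P : Submodule (ZMod 2) V2 | finrank (ZMod 2) P = 1 ∧ P ≤ Y}).toFinset
    with hpts
  have hcard : ∀ Y, (pts Y).card = 2 ^ finrank (ZMod 2) Y - 1 := fun Y => by
    rw [hpts, ← Set.ncard_eq_toFinset_card, point_count]
  set holes : Finset (Submodule (ZMod 2) V2) :=
    (Set.toFinite {P | IsHole S P ∧ P ≤ X}).toFinset with hholesdef
  have hholes : holes.card = holeCount S X := by
    rw [hholesdef, ← Set.ncard_eq_toFinset_card, holeCount]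
  have hdecomp : pts X = (hSfin.toFinset.biUnion fun B => pts (B ⊓ X)) ∪ holes := by
    ext P
    simp only [hpts, hholesdef, Set.Finite.mem_toFinset, Set.mem_setOf_eq, Finset.mem_union,
      Finset.mem_biUnion]
    constructor
    · rintro ⟨h1, h2⟩
      by_cases hb : ∃ B ∈ S, P ≤ B
      · obtain ⟨B, hBS, hPB⟩ := hb
        exact Or.inl ⟨B, hBS, h1, le_inf hPB h2⟩
      · push_neg at hb
        exact Or.inr ⟨⟨h1, hb⟩, h2⟩
    · rintro (⟨B, hB, h1, h2⟩ | ⟨⟨h1, _⟩, h2⟩)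
      · exact ⟨h1, h2.trans inf_le_right⟩
      · exact ⟨h1, h2⟩
  have hdisj : Disjoint (hSfin.toFinset.biUnion fun B => pts (B ⊓ X)) holes := by
    rw [Finset.disjoint_left]
    intro P hP hP'
    simp only [hpts, hholesdef, Finset.mem_biUnion, Set.Finite.mem_toFinset,
      Set.mem_setOf_eq] at hP hP'
    obtain ⟨B, hB, h1, h2⟩ := hP
    exact hP'.1.2 B hB (h2.trans inf_le_left)
  have hpair : ∀ B1 ∈ hSfin.toFinset, ∀ B2 ∈ hSfin.toFinset, B1 ≠ B2 →
      Disjoint (pts (B1 ⊓ X)) (pts (B2 ⊓ X)) := by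
    intro B1 h1 B2 h2 hne
    rw [Finset.disjoint_left]
    intro P hP hP'
    simp only [hpts, Set.Finite.mem_toFinset, Set.mem_setOf_eq] at hP hP'
    have hPle : P ≤ B1 ⊓ B2 := le_inf (hP.2.trans inf_le_left) (hP'.2.trans inf_le_left)
    rw [hS.2 B1 (hSfin.mem_toFinset.1 h1) B2 (hSfin.mem_toFinset.1 h2) hne, le_bot_iff] at hPle
    rw [hPle, finrank_bot] at hP
    exact absurd hP.1 (by omega)
  calc 2 ^ finrank (ZMod 2) X - 1 = (pts X).card := (hcard X).symm
    _ = ((hSfin.toFinset.biUnion fun B => pts (B ⊓ X)) ∪ holes).card := by rw [hdecomp]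
    _ = (hSfin.toFinset.biUnion fun B => pts (B ⊓ X)).card + holes.card :=
        Finset.card_union_of_disjoint hdisj
    _ = (∑ B ∈ hSfin.toFinset, (pts (B ⊓ X)).card) + holes.card := by
        rw [Finset.card_biUnion hpair]
    _ = _ := by
        rw [hholes]
        congr 1
        exact Finset.sum_congr rfl fun B _ => hcard _

open scoped Classical in
lemma blocksIn_eq (S : Set (Submodule (ZMod 2) V2)) (hSfin : S.Finite)
    (H : Submodule (ZMod 2) V2) :
    blocksIn S H = (hSfin.toFinset.filter fun B => B ≤ H).card := by
  classical
  have hset : {B ∈ S | B ≤ H} = ↑(hSfin.toFinset.filter fun B => B ≤ H) := by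
    ext B; simp [Set.Finite.mem_toFinset, Set.mem_setOf_eq]
  rw [blocksIn, hset, Set.ncard_coe_finset]

open scoped Classical in
lemma hyper_eq (S : Set (Submodule (ZMod 2) V2)) (hS : IsPPS S) (hSfin : S.Finite)
    (h16 : S.ncard = 16) (H : Submodule (ZMod 2) V2) (hH : finrank (ZMod 2) H = 6) :
    4 * blocksIn S H + holeCount S H = 15 := by
  classical
  have hScard : hSfin.toFinset.card = 16 := by
    rw [← Set.ncard_eq_toFinset_card _ hSfin, h16]
  have hpart := partition_lemma S hS hSfin H
  rw [hH] at hpart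
  have hsplit := Finset.sum_filter_add_sum_filter_not hSfin.toFinset (fun B => B ≤ H)
    (fun B => 2 ^ finrank (ZMod 2) ↥(B ⊓ H) - 1)
  have h1 : ∑ B ∈ hSfin.toFinset.filter (fun B => B ≤ H),
      (2 ^ finrank (ZMod 2) ↥(B ⊓ H) - 1) = (hSfin.toFinset.filter fun B => B ≤ H).card * 7 := by
    apply Finset.sum_const_nat
    intro B hB
    rw [Finset.mem_filter, Set.Finite.mem_toFinset] at hB
    rw [inf_eq_left.2 hB.2, hS.1 B hB.1]; decide
  have h2 : ∑ B ∈ hSfin.toFinset.filter (fun B => ¬ B ≤ H),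
      (2 ^ finrank (ZMod 2) ↥(B ⊓ H) - 1)
        = (hSfin.toFinset.filter fun B => ¬ B ≤ H).card * 3 := by
    apply Finset.sum_const_nat
    intro B hB
    rw [Finset.mem_filter, Set.Finite.mem_toFinset] at hB
    rw [inf_rank2 B H (hS.1 B hB.1) hH hB.2]; decide
  have hcards := Finset.card_filter_add_card_filter_not
    (s := hSfin.toFinset) (p := fun B => B ≤ H)
  rw [hScard] at hcards
  rw [h1, h2] at hsplit
  rw [← hsplit] at hpart
  rw [blocksIn_eq S hSfin H]
  set b := (hSfin.toFinset.filter fun B => B ≤ H).card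
  set c := (hSfin.toFinset.filter fun B => ¬ B ≤ H).card
  have hb7 : 2 ^ 6 - 1 = 63 := by norm_num
  omega

lemma holes15 (S : Set (Submodule (ZMod 2) V2)) (hS : IsPPS S) (hSfin : S.Finite)
    (h16 : S.ncard = 16) : {P | IsHole S P}.ncard = 15 := by
  classical
  have hScard : hSfin.toFinset.card = 16 := by
    rw [← Set.ncard_eq_toFinset_card _ hSfin, h16]
  have hpart := partition_lemma S hS hSfin ⊤
  rw [finrank_top, rankV] at hpart
  have h1 : ∑ B ∈ hSfin.toFinset, (2 ^ finrank (ZMod 2) ↥(B ⊓ (⊤ : Submodule (ZMod 2) V2)) - 1)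
      = 112 := by
    rw [Finset.sum_const_nat (m := 7) ?_, hScard]
    intro B hB
    rw [Set.Finite.mem_toFinset] at hB
    rw [inf_top_eq, hS.1 B hB]; decide
  rw [h1] at hpart
  have h2 : holeCount S ⊤ = {P | IsHole S P}.ncard := by
    rw [holeCount]; congr 1; ext P; simp
  omega

open scoped Classical in
lemma hyps_filter_card (hHfin : {H : Submodule (ZMod 2) V2 | finrank (ZMod 2) H = 6}.Finite)
    (W : Submodule (ZMod 2) V2) :
    (hHfin.toFinset.filter fun H => W ≤ H).card = 2 ^ (7 - finrank (ZMod 2) W) - 1 := by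
  have hset : {H : Submodule (ZMod 2) V2 | finrank (ZMod 2) H = 6 ∧ W ≤ H}
      = ↑(hHfin.toFinset.filter fun H => W ≤ H) := by
    ext H; simp [Set.Finite.mem_toFinset, Set.mem_setOf_eq]
  rw [← Set.ncard_coe_finset, ← hset, hyp_count]

open scoped Classical in
lemma sum_b (S : Set (Submodule (ZMod 2) V2)) (hS : IsPPS S) (hSfin : S.Finite)
    (h16 : S.ncard = 16)
    (hHfin : {H : Submodule (ZMod 2) V2 | finrank (ZMod 2) H = 6}.Finite) :
    ∑ H ∈ hHfin.toFinset, blocksIn S H = 240 := by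
  have hScard : hSfin.toFinset.card = 16 := by
    rw [← Set.ncard_eq_toFinset_card _ hSfin, h16]
  calc ∑ H ∈ hHfin.toFinset, blocksIn S H
      = ∑ H ∈ hHfin.toFinset, ∑ B ∈ hSfin.toFinset, ite (B ≤ H) 1 0 :=
        Finset.sum_congr rfl fun H _ => by rw [blocksIn_eq S hSfin, Finset.card_filter]
    _ = ∑ B ∈ hSfin.toFinset, ∑ H ∈ hHfin.toFinset, ite (B ≤ H) 1 0 := Finset.sum_comm
    _ = ∑ B ∈ hSfin.toFinset, (hHfin.toFinset.filter fun H => B ≤ H).card :=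
        Finset.sum_congr rfl fun B _ => (Finset.card_filter _ _).symm
    _ = ∑ B ∈ hSfin.toFinset, 15 := by
        apply Finset.sum_congr rfl
        intro B hB
        rw [Set.Finite.mem_toFinset] at hB
        rw [hyps_filter_card hHfin B, hS.1 B hB]; decide
    _ = 240 := by rw [Finset.sum_const, hScard]; rfl

open scoped Classical in
lemma sum_bb (S : Set (Submodule (ZMod 2) V2)) (hS : IsPPS S) (hSfin : S.Finite)
    (h16 : S.ncard = 16)
    (hHfin : {H : Submodule (ZMod 2) V2 | finrank (ZMod 2) H = 6}.Finite) :
    ∑ H ∈ hHfin.toFinset, (blocksIn S H * blocksIn S H - blocksIn S H) = 240 := by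
  have hScard : hSfin.toFinset.card = 16 := by
    rw [← Set.ncard_eq_toFinset_card _ hSfin, h16]
  calc ∑ H ∈ hHfin.toFinset, (blocksIn S H * blocksIn S H - blocksIn S H)
      = ∑ H ∈ hHfin.toFinset, ((hSfin.toFinset.filter fun B => B ≤ H).offDiag).card := by
        apply Finset.sum_congr rfl
        intro H _
        rw [Finset.offDiag_card, blocksIn_eq S hSfin]
    _ = ∑ H ∈ hHfin.toFinset, ∑ p ∈ hSfin.toFinset.offDiag, ite (p.1 ≤ H ∧ p.2 ≤ H) 1 0 := by
        apply Finset.sum_congr rfl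
        intro H _
        rw [← Finset.card_filter]
        congr 1
        ext ⟨B1, B2⟩
        simp only [Finset.mem_offDiag, Finset.mem_filter]
        tauto
    _ = ∑ p ∈ hSfin.toFinset.offDiag, ∑ H ∈ hHfin.toFinset, ite (p.1 ≤ H ∧ p.2 ≤ H) 1 0 :=
        Finset.sum_comm
    _ = ∑ p ∈ hSfin.toFinset.offDiag, (1 : ℕ) := by
        apply Finset.sum_congr rfl
        intro p hp
        rw [Finset.mem_offDiag] at hp
        obtain ⟨h1, h2, hne⟩ := hp
        rw [Set.Finite.mem_toFinset] at h1 h2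
        have hfilt : (hHfin.toFinset.filter fun H => p.1 ≤ H ∧ p.2 ≤ H)
            = hHfin.toFinset.filter fun H => p.1 ⊔ p.2 ≤ H := by
          apply Finset.filter_congr
          intro H _
          rw [sup_le_iff]
        rw [← Finset.card_filter, hfilt, hyps_filter_card hHfin,
          sup_rank6 p.1 p.2 (hS.1 p.1 h1) (hS.1 p.2 h2)
            (hS.2 p.1 h1 p.2 h2 hne)]
        decide
    _ = 240 := by
        rw [Finset.sum_const, Finset.offDiag_card, hScard]; rfl

open scoped Classical in
lemma card_hyps (hHfin : {H : Submodule (ZMod 2) V2 | finrank (ZMod 2) H = 6}.Finite) :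
    hHfin.toFinset.card = 127 := by
  have h := hyps_filter_card hHfin ⊥
  rw [Finset.filter_true_of_mem (fun _ _ => bot_le), finrank_bot] at h
  simpa using h

lemma b0_iff (S : Set (Submodule (ZMod 2) V2)) (hS : IsPPS S) (hSfin : S.Finite)
    (h16 : S.ncard = 16) (H : Submodule (ZMod 2) V2) (hH : finrank (ZMod 2) H = 6) :
    blocksIn S H = 0 ↔ holeSpan S ≤ H := by
  have hkey := hyper_eq S hS hSfin h16 H hH
  have h15 := holes15 S hS hSfin h16
  constructor
  · intro hb
    rw [hb] at hkey
    have hhc : holeCount S H = 15 := by omega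
    have hsub : {P | IsHole S P ∧ P ≤ H} ⊆ {P | IsHole S P} := fun P hP => hP.1
    have heqset : {P | IsHole S P ∧ P ≤ H} = {P | IsHole S P} :=
      Set.eq_of_subset_of_ncard_le hsub (by rw [h15, ← hhc]; rfl) (Set.toFinite _)
    rw [holeSpan]
    apply sSup_le
    intro P hP
    have : P ∈ {P | IsHole S P ∧ P ≤ H} := heqset.symm ▸ hP
    exact this.2
  · intro hle
    have hset : {P | IsHole S P ∧ P ≤ H} = {P | IsHole S P} := by
      ext P
      exact ⟨fun h => h.1, fun h => ⟨h, (le_sSup h).trans hle⟩⟩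
    have : holeCount S H = 15 := by rw [holeCount, hset, h15]
    omega

theorem spectrum_of_size16_pps (S : Set (Submodule (ZMod 2) V2)) (hS : IsPPS S)
    (h16 : S.ncard = 16) :
    {P | IsHole S P}.ncard = 15 ∧
    (finrank (ZMod 2) ↥(holeSpan S) = 4 ∨ finrank (ZMod 2) ↥(holeSpan S) = 5 ∨
      finrank (ZMod 2) ↥(holeSpan S) = 6 ∨ finrank (ZMod 2) ↥(holeSpan S) = 7) ∧
    spec S 0 = 2 ^ (7 - finrank (ZMod 2) ↥(holeSpan S)) - 1 ∧
    spec S 0 =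
      {H : Submodule (ZMod 2) V2 | finrank (ZMod 2) ↥H = 6 ∧ holeSpan S ≤ H}.ncard ∧
    spec S 1 = 21 - 3 * spec S 0 ∧
    spec S 2 = 99 + 3 * spec S 0 ∧
    spec S 3 = 7 - spec S 0 ∧
    ∀ i, 4 ≤ i → spec S i = 0 := by
  classical
  have hSfin : S.Finite := Set.finite_of_ncard_ne_zero (by omega)
  have hHfin : {H : Submodule (ZMod 2) V2 | finrank (ZMod 2) H = 6}.Finite := Set.toFinite _
  set a : ℕ → ℕ := fun i => (hHfin.toFinset.filter fun H => blocksIn S H = i).card with ha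
  have hb3 : ∀ H ∈ hHfin.toFinset, blocksIn S H ≤ 3 := by
    intro H hH
    rw [Set.Finite.mem_toFinset] at hH
    have := hyper_eq S hS hSfin h16 H hH
    omega
  have hmaps : ∀ H ∈ hHfin.toFinset, blocksIn S H ∈ Finset.range 4 := fun H hH =>
    Finset.mem_range.2 (by have := hb3 H hH; omega)
  have hfib : ∀ f : ℕ → ℕ, ∑ i ∈ Finset.range 4, a i * f i
      = ∑ H ∈ hHfin.toFinset, f (blocksIn S H) := by
    intro f
    rw [← Finset.sum_fiberwise_of_maps_to hmaps (fun H => f (blocksIn S H))]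
    apply Finset.sum_congr rfl
    intro i _
    calc a i * f i = ∑ _H ∈ hHfin.toFinset.filter (fun H => blocksIn S H = i), f i := by
          rw [Finset.sum_const, smul_eq_mul, ha]
      _ = _ := Finset.sum_congr rfl fun H hH => by rw [(Finset.mem_filter.1 hH).2]
  have h1 := hfib (fun _ => 1)
  have h2 := hfib (fun i => i)
  have h3 := hfib (fun i => i * i - i)
  simp only [Finset.sum_const, smul_eq_mul, mul_one] at h1
  rw [card_hyps hHfin] at h1
  rw [sum_b S hS hSfin h16 hHfin] at h2
  rw [sum_bb S hS hSfin h16 hHfin] at h3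
  simp only [Finset.sum_range_succ, Finset.sum_range_zero] at h1 h2 h3
  have hspec : ∀ i, spec S i = a i := by
    intro i
    have hai : a i = (hHfin.toFinset.filter fun H => blocksIn S H = i).card := rfl
    rw [spec, hai, ← Set.ncard_coe_finset]
    congr 1
    ext H
    simp [Set.Finite.mem_toFinset, Set.mem_setOf_eq]
  have hset0 : {H : Submodule (ZMod 2) V2 | finrank (ZMod 2) H = 6 ∧ blocksIn S H = 0}
      = {H : Submodule (ZMod 2) V2 | finrank (ZMod 2) H = 6 ∧ holeSpan S ≤ H} := by
    ext H
    exact and_congr_right fun h6 => b0_iff S hS hSfin h16 H h6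
  have hspec0' : spec S 0
      = {H : Submodule (ZMod 2) V2 | finrank (ZMod 2) H = 6 ∧ holeSpan S ≤ H}.ncard := by
    rw [spec, hset0]
  have hspec0 : spec S 0 = 2 ^ (7 - finrank (ZMod 2) (holeSpan S)) - 1 := by
    rw [hspec0', hyp_count]
  have hn7 : finrank (ZMod 2) (holeSpan S) ≤ 7 := by
    have := Submodule.finrank_le (holeSpan S)
    rwa [rankV] at this
  have ha0le : a 0 + a 3 = 7 := by omega
  have hn4 : 4 ≤ finrank (ZMod 2) (holeSpan S) := by
    by_contra hlt
    push_neg at hlt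
    have hk : 4 ≤ 7 - finrank (ZMod 2) (holeSpan S) := by omega
    have hpow : 2 ^ 4 ≤ 2 ^ (7 - finrank (ZMod 2) (holeSpan S)) :=
      Nat.pow_le_pow_right (by norm_num) hk
    rw [hspec 0] at hspec0
    omega
  have hzero : ∀ i, 4 ≤ i → spec S i = 0 := by
    intro i hi
    rw [hspec i, ha]
    rw [Finset.card_eq_zero, Finset.filter_eq_empty_iff]
    intro H hH
    have := hb3 H hH
    omega
  refine ⟨holes15 S hS hSfin h16, by omega, hspec0, hspec0', ?_, ?_, ?_, hzero⟩
  · rw [hspec 1, hspec 0]; omega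
  · rw [hspec 2, hspec 0]; omega
  · rw [hspec 3, hspec 0]; omega
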